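/- Let m ≥ 2, 1 ≤ k ≤ m, let a^1, …, a^m ∈ ℝ^n be pairwise distinct, let F be a nonempty compact convex subset of ℝ^n with 0 ∈ int(F) and Minkowski gauge ρ_F, and let f_F(x^1, …, x^k) = Σ_{i=1}^m min_{ℓ=1,…,k} ρ_F(x^ℓ − a^i). Then the set S_F of global minimizers of f_F over (ℝ^n)^k is compact (in particular, bounded). -/

import Mathlib

/-- `min_{ℓ=1,…,k} ρ_F(x^ℓ − p)`. -/
noncomputable def minGauge {n k : ℕ} (hk : 0 < k) (F : Set (EuclideanSpace ℝ (Fin n)))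
    (x : Fin k → EuclideanSpace ℝ (Fin n)) (p : EuclideanSpace ℝ (Fin n)) : ℝ :=
  Finset.univ.inf' ⟨⟨0, hk⟩, Finset.mem_univ _⟩ fun ℓ => gauge F (x ℓ - p)

/-- The generalized multi-source Weber objective
`f_F(x) = Σ_i min_ℓ ρ_F(x^ℓ − a^i)`. -/
noncomputable def weberObj {n m k : ℕ} (hk : 0 < k) (F : Set (EuclideanSpace ℝ (Fin n)))
    (a : Fin m → EuclideanSpace ℝ (Fin n)) (x : Fin k → EuclideanSpace ℝ (Fin n)) : ℝ :=
  ∑ i, minGauge hk F x (a i)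

lemma minGauge_nonneg {n k : ℕ} (hk : 0 < k) (F : Set (EuclideanSpace ℝ (Fin n)))
    (x : Fin k → EuclideanSpace ℝ (Fin n)) (p : EuclideanSpace ℝ (Fin n)) :
    0 ≤ minGauge hk F x p :=
  Finset.le_inf' _ _ fun _ _ => gauge_nonneg _

lemma minGauge_le {n k : ℕ} (hk : 0 < k) (F : Set (EuclideanSpace ℝ (Fin n)))
    (x : Fin k → EuclideanSpace ℝ (Fin n)) (p : EuclideanSpace ℝ (Fin n)) (ℓ : Fin k) :
    minGauge hk F x p ≤ gauge F (x ℓ - p) :=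
  Finset.inf'_le _ (Finset.mem_univ ℓ)

lemma le_weberObj {n m k : ℕ} (hk : 0 < k) (F : Set (EuclideanSpace ℝ (Fin n)))
    (a : Fin m → EuclideanSpace ℝ (Fin n)) (x : Fin k → EuclideanSpace ℝ (Fin n)) (i : Fin m) :
    minGauge hk F x (a i) ≤ weberObj hk F a x :=
  Finset.single_le_sum (f := fun i => minGauge hk F x (a i))
    (fun i _ => minGauge_nonneg hk F x (a i)) (Finset.mem_univ i)

theorem stmt6 (n m k : ℕ) (hm : 2 ≤ m) (hk : 1 ≤ k) (hkm : k ≤ m)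
    (a : Fin m → EuclideanSpace ℝ (Fin n)) (ha : Function.Injective a)
    (F : Set (EuclideanSpace ℝ (Fin n)))
    (hne : F.Nonempty) (hcomp : IsCompact F) (hconv : Convex ℝ F)
    (h0 : (0 : EuclideanSpace ℝ (Fin n)) ∈ interior F) :
    IsCompact {x : Fin k → EuclideanSpace ℝ (Fin n) |
        ∀ y, weberObj hk F a x ≤ weberObj hk F a y} := by
  have hm0 : 0 < m := lt_of_lt_of_le two_pos hm
  have hF0 : F ∈ nhds (0 : EuclideanSpace ℝ (Fin n)) := mem_interior_iff_mem_nhds.1 h0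
  have habs : Absorbent ℝ F := absorbent_nhds_zero hF0
  have hvnb : Bornology.IsVonNBounded ℝ F :=
    NormedSpace.isVonNBounded_iff _ |>.2 hcomp.isBounded
  -- gauge is zero only at zero
  have hgz : ∀ z : EuclideanSpace ℝ (Fin n), gauge F z = 0 ↔ z = 0 := fun z =>
    gauge_eq_zero habs hvnb
  -- continuity of the objective
  have hgc : Continuous (gauge F) := continuous_gauge hconv hF0
  have hfc : Continuous (weberObj hk F a) := by
    apply continuous_finset_sum
    intro i _
    unfold minGauge
    exact Continuous.finset_inf'_apply ⟨⟨0, hk⟩, Finset.mem_univ _⟩ fun ℓ _ =>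
      hgc.comp ((continuous_apply ℓ).sub continuous_const)
  -- the set of minimizers is closed
  have hclosed : IsClosed {x : Fin k → EuclideanSpace ℝ (Fin n) |
      ∀ y, weberObj hk F a x ≤ weberObj hk F a y} := by
    have : {x : Fin k → EuclideanSpace ℝ (Fin n) |
        ∀ y, weberObj hk F a x ≤ weberObj hk F a y} =
        ⋂ y, {x | weberObj hk F a x ≤ weberObj hk F a y} := by
      ext x; simp [Set.mem_iInter]
    rw [this]
    exact isClosed_iInter fun y => isClosed_le hfc continuous_const
  -- upper bound on the optimal value
  set C : ℝ := weberObj hk F a (fun _ => a ⟨0, hm0⟩) with hC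
  -- radius bound for F
  obtain ⟨r, hr⟩ := hcomp.isBounded.subset_closedBall 0
  set R : ℝ := max r 1 with hRdef
  have hR1 : (1 : ℝ) ≤ R := le_max_right _ _
  have hR0 : 0 < R := lt_of_lt_of_le one_pos hR1
  have hRF : F ⊆ Metric.closedBall 0 R :=
    hr.trans (Metric.closedBall_subset_closedBall (le_max_left _ _))
  have hnorm_le : ∀ z : EuclideanSpace ℝ (Fin n), ‖z‖ ≤ R * gauge F z := by
    intro z
    have := le_gauge_of_subset_closedBall (x := z) habs hR0.le hRF
    rw [div_le_iff₀ hR0] at this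
    linarith [this]
  -- key claim: each facility of a minimizer is close to some demand point
  have key : ∀ x ∈ {x : Fin k → EuclideanSpace ℝ (Fin n) |
      ∀ y, weberObj hk F a x ≤ weberObj hk F a y},
      ∀ ℓ : Fin k, ∃ i : Fin m, gauge F (x ℓ - a i) ≤ C := by
    intro x hx ℓ
    by_contra hcon
    push_neg at hcon
    have hxC : weberObj hk F a x ≤ C := hx _
    -- at each demand point, the min is achieved by a facility other than ℓ
    have hach : ∀ i : Fin m, ∃ ℓ' : Fin k, ℓ' ≠ ℓ ∧
        minGauge hk F x (a i) = gauge F (x ℓ' - a i) := by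
      intro i
      obtain ⟨ℓ', -, hℓ'⟩ := Finset.exists_mem_eq_inf' ⟨⟨0, hk⟩, Finset.mem_univ _⟩
        (fun ℓ => gauge F (x ℓ - a i))
      have heq : minGauge hk F x (a i) = gauge F (x ℓ' - a i) := hℓ'
      refine ⟨ℓ', ?_, heq⟩
      intro h
      have h1 : minGauge hk F x (a i) ≤ C := (le_weberObj hk F a x i).trans hxC
      have h2 : gauge F (x ℓ' - a i) ≤ C := heq ▸ h1
      rw [h] at h2
      exact absurd h2 (not_le.2 (hcon i))
    -- the demand points already exactly covered number at most k - 1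
    have hzcard : (Finset.univ.filter
        (fun i : Fin m => minGauge hk F x (a i) = 0)).card < m := by
      have hinj : ∀ i ∈ Finset.univ.filter
          (fun i : Fin m => minGauge hk F x (a i) = 0),
          ∃ ℓ' : Fin k, ℓ' ≠ ℓ ∧ x ℓ' = a i := by
        intro i hi
        rw [Finset.mem_filter] at hi
        obtain ⟨ℓ', hℓ'ne, hℓ'⟩ := hach i
        refine ⟨ℓ', hℓ'ne, ?_⟩
        have : gauge F (x ℓ' - a i) = 0 := by rw [← hℓ', hi.2]
        rw [hgz] at this
        exact sub_eq_zero.1 this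
      choose φ hφne hφ using hinj
      have hcard : (Finset.univ.filter
          (fun i : Fin m => minGauge hk F x (a i) = 0)).card ≤
          (Finset.univ.erase ℓ).card := by
        apply Finset.card_le_card_of_injOn (fun i => if h : _ then φ i h else ⟨0, hk⟩)
        · intro i hi
          have hi' : i ∈ Finset.univ.filter
              (fun i : Fin m => minGauge hk F x (a i) = 0) := hi
          simp only [hi', dif_pos]
          exact Finset.mem_erase.2 ⟨hφne i hi, Finset.mem_univ _⟩
        · intro i hi j hj hij
          have hi' : i ∈ Finset.univ.filter
              (fun i : Fin m => minGauge hk F x (a i) = 0) := hi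
          have hj' : j ∈ Finset.univ.filter
              (fun i : Fin m => minGauge hk F x (a i) = 0) := hj
          simp only [dif_pos hi', dif_pos hj'] at hij
          apply ha
          rw [← hφ i hi', ← hφ j hj', hij]
      rw [Finset.card_erase_of_mem (Finset.mem_univ _), Finset.card_univ,
        Fintype.card_fin] at hcard
      calc _ ≤ k - 1 := hcard
        _ < m := lt_of_lt_of_le (Nat.sub_lt hk Nat.one_pos) hkm
    -- pick an uncovered demand point
    have : ∃ j : Fin m, minGauge hk F x (a j) ≠ 0 := by
      by_contra hall
      push_neg at hall
      have : (Finset.univ.filter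
          (fun i : Fin m => minGauge hk F x (a i) = 0)) = Finset.univ := by
        apply Finset.eq_univ_of_card
        · rw [Fintype.card_fin]
          apply le_antisymm (Finset.card_le_univ _ |>.trans_eq (by simp))
          · rw [Finset.filter_true_of_mem (fun i _ => hall i)]
            simp
      rw [this, Finset.card_univ, Fintype.card_fin] at hzcard
      exact lt_irrefl _ hzcard
    obtain ⟨j, hj⟩ := this
    have hjpos : 0 < minGauge hk F x (a j) :=
      lt_of_le_of_ne (minGauge_nonneg hk F x (a j)) (Ne.symm hj)
    -- moving facility ℓ to a j strictly improves: contradiction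
    set y : Fin k → EuclideanSpace ℝ (Fin n) := Function.update x ℓ (a j) with hy
    have hyj : minGauge hk F y (a j) = 0 := by
      apply le_antisymm _ (minGauge_nonneg hk F y (a j))
      have := minGauge_le hk F y (a j) ℓ
      rwa [hy, Function.update_self, sub_self, gauge_zero] at this
    have hyle : ∀ i : Fin m, i ≠ j → minGauge hk F y (a i) ≤ minGauge hk F x (a i) := by
      intro i _
      obtain ⟨ℓ', hℓ'ne, hℓ'⟩ := hach i
      have := minGauge_le hk F y (a i) ℓ'
      rwa [hy, Function.update_of_ne hℓ'ne, ← hℓ'] at this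
    have hlt : weberObj hk F a y < weberObj hk F a x := by
      rw [weberObj, weberObj, ← Finset.add_sum_erase _ _ (Finset.mem_univ j),
        ← Finset.add_sum_erase _ _ (Finset.mem_univ j), hyj, zero_add]
      calc ∑ i ∈ Finset.univ.erase j, minGauge hk F y (a i)
          ≤ ∑ i ∈ Finset.univ.erase j, minGauge hk F x (a i) := by
            apply Finset.sum_le_sum
            intro i hi
            exact hyle i (Finset.mem_erase.1 hi).1
        _ < minGauge hk F x (a j) + ∑ i ∈ Finset.univ.erase j, minGauge hk F x (a i) := by
            linarith
    exact absurd (hx y) (not_le.2 hlt)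
  -- boundedness of the minimizer set
  have hA : ∃ M : ℝ, ∀ i : Fin m, ‖a i‖ ≤ M := by
    refine ⟨Finset.univ.sup' ⟨⟨0, hm0⟩, Finset.mem_univ _⟩ (fun i => ‖a i‖), fun i => ?_⟩
    exact Finset.le_sup' (fun i => ‖a i‖) (Finset.mem_univ i)
  obtain ⟨M, hM⟩ := hA
  have hbdd : Bornology.IsBounded {x : Fin k → EuclideanSpace ℝ (Fin n) |
      ∀ y, weberObj hk F a x ≤ weberObj hk F a y} := by
    apply Bornology.IsBounded.subset (Metric.isBounded_closedBall
      (x := (0 : Fin k → EuclideanSpace ℝ (Fin n))) (r := R * C + M))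
    intro x hx
    rw [Metric.mem_closedBall, dist_zero_right]
    have hRC : (0 : ℝ) ≤ R * C + M := by
      have h0C : 0 ≤ C := Finset.sum_nonneg fun i _ => minGauge_nonneg _ _ _ _
      have h0M : 0 ≤ M := (norm_nonneg _).trans (hM ⟨0, hm0⟩)
      positivity
    rw [pi_norm_le_iff_of_nonneg hRC]
    intro ℓ
    obtain ⟨i, hi⟩ := key x hx ℓ
    have h1 : ‖x ℓ - a i‖ ≤ R * C := by
      calc ‖x ℓ - a i‖ ≤ R * gauge F (x ℓ - a i) := hnorm_le _
        _ ≤ R * C := by nlinarith [hR0]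
    calc ‖x ℓ‖ = ‖(x ℓ - a i) + a i‖ := by rw [sub_add_cancel]
      _ ≤ ‖x ℓ - a i‖ + ‖a i‖ := norm_add_le _ _
      _ ≤ R * C + M := add_le_add h1 (hM i)
  exact Metric.isCompact_of_isClosed_isBounded hclosed hbdd
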